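/- Comparison principle: let u_1, u_2 : [ρ*, ∞) → ℝ be C^2 radial functions with u_1 ≥ 1, u_2 ≥ 1, both satisfying u'' + 2 coth(ρ) u' + (3/4) u (1 - u^4) = f(ρ) for the same function f on (ρ*, ∞), with u_1(ρ*) ≥ u_2(ρ*) and u_1(ρ) - u_2(ρ) → 0 as ρ → ∞. Then u_1 ≥ u_2 on [ρ*, ∞). -/

import Mathlib

open Filter Set

/-- Second derivative test: at an interior local minimum, the second derivative is nonnegative. -/
lemma second_deriv_nonneg_of_isLocalMin {g : ℝ → ℝ} {a : ℝ}
    (hg : ∀ᶠ x in nhds a, DifferentiableAt ℝ g x)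
    (hg2 : DifferentiableAt ℝ (deriv g) a)
    (hmin : IsLocalMin g a) : 0 ≤ deriv (deriv g) a := by
  by_contra hc
  push_neg at hc
  have h0 : deriv g a = 0 := hmin.deriv_eq_zero
  have hslope : Tendsto (slope (deriv g) a) (nhdsWithin a {a}ᶜ) (nhds (deriv (deriv g) a)) :=
    hasDerivAt_iff_tendsto_slope.mp hg2.hasDerivAt
  have hev : ∀ᶠ x in nhdsWithin a (Set.Ioi a), slope (deriv g) a x < 0 :=
    (hslope.mono_left (nhdsWithin_mono a (show Set.Ioi a ⊆ {a}ᶜ from fun x hx =>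
      Set.mem_compl_singleton_iff.mpr (LT.lt.ne' hx)))).eventually_lt_const hc
  have hev2 : ∀ᶠ x in nhdsWithin a (Set.Ioi a), deriv g x < 0 := by
    filter_upwards [hev, self_mem_nhdsWithin] with x hx hx'
    rw [slope_def_field, h0, sub_zero] at hx
    have hxa : 0 < x - a := sub_pos.2 hx'
    rcases div_neg_iff.mp hx with ⟨_, h2⟩ | ⟨h1, _⟩
    · linarith
    · exact h1
  obtain ⟨u, hu, hIoo⟩ := mem_nhdsGT_iff_exists_Ioo_subset.mp hev2
  obtain ⟨ε, hε, hball⟩ := Metric.eventually_nhds_iff.mp (hg.and hmin)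
  set b := min u (a + ε / 2) with hb
  have hab : a < b := lt_min hu (by linarith)
  have hbu : b ≤ u := min_le_left _ _
  have hbε : b - a ≤ ε / 2 := by
    have := min_le_right u (a + ε / 2)
    rw [← hb] at this; linarith
  have hdist : ∀ x ∈ Set.Icc a b, dist x a < ε := by
    intro x hx
    rw [Real.dist_eq, abs_of_nonneg (by linarith [hx.1])]
    linarith [hx.2]
  have hanti : StrictAntiOn g (Set.Icc a b) := by
    apply strictAntiOn_of_deriv_neg (convex_Icc a b)
    · intro x hx
      exact ((hball (hdist x hx)).1.continuousAt).continuousWithinAt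
    · intro x hx
      rw [interior_Icc] at hx
      exact hIoo ⟨hx.1, lt_of_lt_of_le hx.2 hbu⟩
  have h1 : g b < g a := hanti (Set.left_mem_Icc.2 hab.le) (Set.right_mem_Icc.2 hab.le) hab
  have h2 : g a ≤ g b := (hball (hdist b ⟨hab.le, le_rfl⟩)).2
  linarith

/-- Comparison principle for radial solutions of `u'' + 2 coth(ρ) u' + (3/4) u (1 - u^4) = f`. -/
theorem radial_comparison (ρs : ℝ) (hρs : 0 < ρs) (u₁ u₂ f : ℝ → ℝ)
    (hu₁ : ContDiffOn ℝ 2 u₁ (Set.Ici ρs)) (hu₂ : ContDiffOn ℝ 2 u₂ (Set.Ici ρs))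
    (hu₁1 : ∀ ρ, ρs ≤ ρ → 1 ≤ u₁ ρ) (hu₂1 : ∀ ρ, ρs ≤ ρ → 1 ≤ u₂ ρ)
    (hode₁ : ∀ ρ, ρs < ρ →
      deriv (deriv u₁) ρ + 2 * (Real.cosh ρ / Real.sinh ρ) * deriv u₁ ρ +
        (3 / 4) * u₁ ρ * (1 - (u₁ ρ) ^ 4) = f ρ)
    (hode₂ : ∀ ρ, ρs < ρ →
      deriv (deriv u₂) ρ + 2 * (Real.cosh ρ / Real.sinh ρ) * deriv u₂ ρ +
        (3 / 4) * u₂ ρ * (1 - (u₂ ρ) ^ 4) = f ρ)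
    (hbd : u₂ ρs ≤ u₁ ρs)
    (hlim : Filter.Tendsto (fun ρ => u₁ ρ - u₂ ρ) Filter.atTop (nhds 0)) :
    ∀ ρ, ρs ≤ ρ → u₂ ρ ≤ u₁ ρ := by
  by_contra hcon
  push_neg at hcon
  obtain ⟨ρ₀, hρ₀, hneg⟩ := hcon
  set η : ℝ → ℝ := fun x => u₁ x - u₂ x with hηdef
  clear_value η
  have hη0 : η ρ₀ < 0 := by simp only [hηdef]; linarith
  have hev : ∀ᶠ x in atTop, η ρ₀ / 2 < η x :=
    hlim.eventually_const_lt (by linarith)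
  obtain ⟨R₀, hR₀⟩ := eventually_atTop.mp hev
  set R := max R₀ ρ₀ with hRdef
  have hρ₀R : ρ₀ ≤ R := le_max_right _ _
  have hρsR : ρs ≤ R := le_trans hρ₀ hρ₀R
  have hcont : ContinuousOn η (Set.Icc ρs R) := by
    simp only [hηdef]
    exact (hu₁.continuousOn.sub hu₂.continuousOn).mono Set.Icc_subset_Ici_self
  obtain ⟨m, hmK, hmin⟩ := isCompact_Icc.exists_isMinOn ⟨ρ₀, hρ₀, hρ₀R⟩ hcont
  have hmρ₀ : η m ≤ η ρ₀ := hmin ⟨hρ₀, hρ₀R⟩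
  have hηs : 0 ≤ η ρs := by simp only [hηdef]; linarith
  have hms : ρs < m := lt_of_le_of_ne hmK.1 (by rintro rfl; linarith)
  have hηR : η ρ₀ / 2 < η R := hR₀ R (le_max_left _ _)
  have hmR : m < R := lt_of_le_of_ne hmK.2 (by rintro rfl; linarith)
  have hlocmin : IsLocalMin η m := hmin.isLocalMin (Icc_mem_nhds hms hmR)
  -- differentiability facts
  have hu₁' : ContDiffOn ℝ 2 u₁ (Set.Ioi ρs) := hu₁.mono Set.Ioi_subset_Ici_self
  have hu₂' : ContDiffOn ℝ 2 u₂ (Set.Ioi ρs) := hu₂.mono Set.Ioi_subset_Ici_self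
  have hd1 : ∀ x ∈ Set.Ioi ρs, DifferentiableAt ℝ u₁ x := fun x hx =>
    (hu₁'.differentiableOn (by norm_num)).differentiableAt (isOpen_Ioi.mem_nhds hx)
  have hd2 : ∀ x ∈ Set.Ioi ρs, DifferentiableAt ℝ u₂ x := fun x hx =>
    (hu₂'.differentiableOn (by norm_num)).differentiableAt (isOpen_Ioi.mem_nhds hx)
  have hdd1 : ContDiffOn ℝ 1 (deriv u₁) (Set.Ioi ρs) :=
    hu₁'.deriv_of_isOpen isOpen_Ioi (by norm_num)
  have hdd2 : ContDiffOn ℝ 1 (deriv u₂) (Set.Ioi ρs) :=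
    hu₂'.deriv_of_isOpen isOpen_Ioi (by norm_num)
  have hdd1m : DifferentiableAt ℝ (deriv u₁) m :=
    (hdd1.differentiableOn one_ne_zero).differentiableAt (isOpen_Ioi.mem_nhds hms)
  have hdd2m : DifferentiableAt ℝ (deriv u₂) m :=
    (hdd2.differentiableOn one_ne_zero).differentiableAt (isOpen_Ioi.mem_nhds hms)
  have hmemIoi : ∀ᶠ x in nhds m, x ∈ Set.Ioi ρs := isOpen_Ioi.eventually_mem hms
  have hdη : ∀ᶠ x in nhds m, DifferentiableAt ℝ η x := by
    filter_upwards [hmemIoi] with x hx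
    rw [hηdef]
    exact (hd1 x hx).sub (hd2 x hx)
  have heq : deriv η =ᶠ[nhds m] fun x => deriv u₁ x - deriv u₂ x := by
    filter_upwards [hmemIoi] with x hx
    rw [hηdef]
    exact deriv_sub (hd1 x hx) (hd2 x hx)
  have hdη2 : DifferentiableAt ℝ (deriv η) m :=
    (hdd1m.sub hdd2m).congr_of_eventuallyEq heq
  have hsecond : 0 ≤ deriv (deriv η) m :=
    second_deriv_nonneg_of_isLocalMin hdη hdη2 hlocmin
  have hDD : deriv (deriv η) m = deriv (deriv u₁) m - deriv (deriv u₂) m := by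
    rw [heq.deriv_eq]
    exact deriv_sub hdd1m hdd2m
  have hfirst : deriv η m = 0 := hlocmin.deriv_eq_zero
  have hder : deriv u₁ m = deriv u₂ m := by
    have h := heq.eq_of_nhds
    rw [hfirst] at h
    linarith [h.symm]
  have e1 := hode₁ m hms
  have e2 := hode₂ m hms
  rw [hder] at e1
  have hab : u₁ m < u₂ m := by
    have h := lt_of_le_of_lt hmρ₀ hη0
    rw [hηdef] at h
    simpa using sub_neg.mp h
  have ha1 : 1 ≤ u₁ m := hu₁1 m hms.le
  have hb1 : 1 ≤ u₂ m := hu₂1 m hms.le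
  have hkey : deriv (deriv u₁) m - deriv (deriv u₂) m =
      (3 / 4) * ((u₁ m) ^ 5 - (u₂ m) ^ 5 - u₁ m + u₂ m) := by
    linear_combination e1 - e2
  have hG : 0 < (u₁ m) ^ 4 + (u₁ m) ^ 3 * u₂ m + (u₁ m) ^ 2 * (u₂ m) ^ 2 +
      u₁ m * (u₂ m) ^ 3 + (u₂ m) ^ 4 - 1 := by
    have h0a : (0:ℝ) ≤ u₁ m := by linarith
    have h0b : (0:ℝ) ≤ u₂ m := by linarith
    nlinarith [one_le_pow₀ ha1 (n := 4), one_le_pow₀ hb1 (n := 4),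
      mul_nonneg (pow_nonneg h0a 3) h0b, mul_nonneg (pow_nonneg h0a 2) (pow_nonneg h0b 2),
      mul_nonneg h0a (pow_nonneg h0b 3)]
  have hneg' : (u₁ m) ^ 5 - (u₂ m) ^ 5 - u₁ m + u₂ m < 0 := by
    nlinarith [mul_pos (sub_pos.2 hab) hG]
  rw [hDD, hkey] at hsecond
  linarith
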